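/- Let p₁, p₂ be reals with 0 < p₁ ≤ p₂ and 2p₁ + 2p₂ < 1. Set α₁ = p₁/p₂, κ = √((1 − 2p₁ − 2p₂)/p₂), and let B_κ denote the LGF with parameters α₁ and c = κ. Define C = 1 / ( 1 + (2p₁/p₂)·B_κ(1,0) + 2·B_κ(0,1) ) and ρ(n,m) = (C/p₂)·B_κ(n,m) for (n,m) ∈ ℤ². Then ρ(0,0) = 1, and for every (n,m) ∈ ℤ² with (n,m) ≠ (0,0), ρ(n,m) = p₁·ρ(n+1,m) + p₁·ρ(n−1,m) + p₂·ρ(n,m+1) + p₂·ρ(n,m−1). -/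

import Mathlib

open MeasureTheory

/-- The lattice Green's function of the 2D screened Poisson equation. -/
noncomputable def B (α₁ c : ℝ) (n m : ℤ) : ℂ :=
  (1 / (2 * Real.pi) ^ 2 : ℂ) *
    ∫ ξ : ℝ × ℝ in Set.Icc (-Real.pi) Real.pi ×ˢ Set.Icc (-Real.pi) Real.pi,
      Complex.exp (-Complex.I * ((n : ℂ) * (ξ.1 : ℂ) + (m : ℂ) * (ξ.2 : ℂ))) /
        ((2 * α₁ * (1 - Real.cos ξ.1) + 2 * (1 - Real.cos ξ.2) + c ^ 2 : ℝ) : ℂ)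

noncomputable def Dfun (α₁ c : ℝ) (ξ : ℝ × ℝ) : ℝ :=
  2 * α₁ * (1 - Real.cos ξ.1) + 2 * (1 - Real.cos ξ.2) + c ^ 2

lemma Dfun_pos {α₁ c : ℝ} (hα : 0 < α₁) (hc : 0 < c) (ξ : ℝ × ℝ) : 0 < Dfun α₁ c ξ := by
  have h1 := Real.cos_le_one ξ.1
  have h2 := Real.cos_le_one ξ.2
  have : 0 < c ^ 2 := by positivity
  unfold Dfun
  nlinarith

noncomputable def ffun (α₁ c : ℝ) (n m : ℤ) (ξ : ℝ × ℝ) : ℂ :=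
  Complex.exp (-Complex.I * ((n : ℂ) * (ξ.1 : ℂ) + (m : ℂ) * (ξ.2 : ℂ))) /
    ((Dfun α₁ c ξ : ℝ) : ℂ)

noncomputable def Sbox : Set (ℝ × ℝ) := Set.Icc (-Real.pi) Real.pi ×ˢ Set.Icc (-Real.pi) Real.pi

lemma ffun_cont {α₁ c : ℝ} (hα : 0 < α₁) (hc : 0 < c) (n m : ℤ) :
    Continuous (ffun α₁ c n m) := by
  apply Continuous.div
  · exact Complex.continuous_exp.comp (by continuity)
  · apply Complex.continuous_ofReal.comp
    unfold Dfun
    fun_prop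
  · intro ξ
    simp only [ne_eq, Complex.ofReal_eq_zero]
    exact (Dfun_pos hα hc ξ).ne'

lemma ffun_integrable {α₁ c : ℝ} (hα : 0 < α₁) (hc : 0 < c) (n m : ℤ) :
    IntegrableOn (ffun α₁ c n m) Sbox := by
  exact ((ffun_cont hα hc n m).continuousOn).integrableOn_compact
    ((isCompact_Icc).prod isCompact_Icc)

lemma B_eq (α₁ c : ℝ) (n m : ℤ) :
    B α₁ c n m = (1 / (2 * Real.pi) ^ 2 : ℂ) * ∫ ξ in Sbox, ffun α₁ c n m ξ := rfl


lemma int_exp1 (n : ℤ) :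
    ∫ x in Set.Icc (-Real.pi) Real.pi, Complex.exp (-Complex.I * (n * x)) =
      if n = 0 then (2 * Real.pi : ℂ) else 0 := by
  have hle : (-Real.pi : ℝ) ≤ Real.pi := by linarith [Real.pi_pos]
  rw [MeasureTheory.integral_Icc_eq_integral_Ioc,
    ← intervalIntegral.integral_of_le hle]
  by_cases hn : n = 0
  · subst hn
    simp [mul_comm, two_mul]
    ring
  · have hc : (-Complex.I * n) ≠ 0 := by
      simp [Complex.I_ne_zero, hn]
    have : ∀ x : ℝ, Complex.exp (-Complex.I * (n * x)) =
        Complex.exp ((-Complex.I * n) * x) := by intro x; ring_nf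
    simp_rw [this]
    rw [integral_exp_mul_complex hc, if_neg hn]
    have h1 : Complex.exp (-Complex.I * n * (Real.pi : ℂ)) -
        Complex.exp (-Complex.I * n * (-Real.pi : ℂ)) =
        - (2 * Complex.sin ((n : ℂ) * Real.pi)) * Complex.I := by
      rw [Complex.sin]
      have e1 : (-Complex.I * n * (Real.pi : ℂ)) = -((n : ℂ) * Real.pi * Complex.I) := by ring
      have e2 : (-Complex.I * n * (-Real.pi : ℂ)) = (n : ℂ) * Real.pi * Complex.I := by ring
      rw [e1, e2]
      field_simp
      linear_combination (Complex.exp (-((n:ℂ) * Real.pi * Complex.I)) - Complex.exp ((n:ℂ) * Real.pi * Complex.I)) * Complex.I_mul_I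
    push_cast
    rw [h1, Complex.sin_int_mul_pi]
    simp


lemma int_exp2 (n m : ℤ) :
    ∫ ξ : ℝ × ℝ in Set.Icc (-Real.pi) Real.pi ×ˢ Set.Icc (-Real.pi) Real.pi,
      Complex.exp (-Complex.I * ((n : ℂ) * (ξ.1 : ℂ) + (m : ℂ) * (ξ.2 : ℂ))) =
      if n = 0 ∧ m = 0 then ((2 * Real.pi) ^ 2 : ℂ) else 0 := by
  have key : ∀ ξ : ℝ × ℝ,
      Complex.exp (-Complex.I * ((n : ℂ) * (ξ.1 : ℂ) + (m : ℂ) * (ξ.2 : ℂ))) =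
      (fun x : ℝ => Complex.exp (-Complex.I * (n * x))) ξ.1 *
      (fun y : ℝ => Complex.exp (-Complex.I * (m * y))) ξ.2 := by
    intro ξ
    rw [← Complex.exp_add]
    ring_nf
  simp_rw [key]
  have hp := MeasureTheory.setIntegral_prod_mul (μ := volume) (ν := volume)
    (fun x : ℝ => Complex.exp (-Complex.I * (n * x)))
    (fun y : ℝ => Complex.exp (-Complex.I * (m * y)))
    (Set.Icc (-Real.pi) Real.pi) (Set.Icc (-Real.pi) Real.pi)
  rw [MeasureTheory.Measure.volume_eq_prod, hp, int_exp1, int_exp1]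
  by_cases hn : n = 0 <;> by_cases hm : m = 0 <;> simp [hn, hm] <;> ring


lemma key_int (α₁ c : ℝ) (hα : 0 < α₁) (hc : 0 < c) (n m : ℤ)
    (hint : ∀ k l : ℤ, IntegrableOn (ffun α₁ c k l) Sbox)
    (pw : ∀ ξ : ℝ × ℝ,
      (2*α₁+2+c^2 : ℂ) * ffun α₁ c n m ξ =
        (α₁:ℂ) * ffun α₁ c (n+1) m ξ + (α₁:ℂ) * ffun α₁ c (n-1) m ξ +
        ffun α₁ c n (m+1) ξ + ffun α₁ c n (m-1) ξ +
        Complex.exp (-Complex.I * ((n : ℂ) * ξ.1 + (m : ℂ) * ξ.2))) :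
    (2*α₁+2+c^2 : ℂ) * (∫ ξ in Sbox, ffun α₁ c n m ξ)
      - (α₁:ℂ) * (∫ ξ in Sbox, ffun α₁ c (n+1) m ξ)
      - (α₁:ℂ) * (∫ ξ in Sbox, ffun α₁ c (n-1) m ξ)
      - (∫ ξ in Sbox, ffun α₁ c n (m+1) ξ)
      - (∫ ξ in Sbox, ffun α₁ c n (m-1) ξ)
    = (if n = 0 ∧ m = 0 then ((2 * Real.pi) ^ 2 : ℂ) else 0) := by
  have h0 := (hint n m).const_mul (2*α₁+2+c^2 : ℂ)
  have h1 := (hint (n+1) m).const_mul (α₁:ℂ)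
  have h2 := (hint (n-1) m).const_mul (α₁:ℂ)
  have h3 := hint n (m+1)
  have h4 := hint n (m-1)
  have step : ∫ ξ in Sbox,
      ((2*α₁+2+c^2 : ℂ) * ffun α₁ c n m ξ - (α₁:ℂ) * ffun α₁ c (n+1) m ξ
        - (α₁:ℂ) * ffun α₁ c (n-1) m ξ - ffun α₁ c n (m+1) ξ - ffun α₁ c n (m-1) ξ)
      = ∫ ξ : ℝ × ℝ in Sbox,
          Complex.exp (-Complex.I * ((n : ℂ) * ξ.1 + (m : ℂ) * ξ.2)) := by
    apply integral_congr_ae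
    filter_upwards with ξ
    have := pw ξ
    linear_combination this
  have h01 : Integrable (fun a : ℝ × ℝ => (2*α₁+2+c^2 : ℂ) * ffun α₁ c n m a - (α₁:ℂ) * ffun α₁ c (n+1) m a) (volume.restrict Sbox) := h0.sub h1
  have h012 : Integrable (fun a : ℝ × ℝ => ((2*α₁+2+c^2 : ℂ) * ffun α₁ c n m a - (α₁:ℂ) * ffun α₁ c (n+1) m a) - (α₁:ℂ) * ffun α₁ c (n-1) m a) (volume.restrict Sbox) := h01.sub h2
  have h0123 : Integrable (fun a : ℝ × ℝ => (((2*α₁+2+c^2 : ℂ) * ffun α₁ c n m a - (α₁:ℂ) * ffun α₁ c (n+1) m a) - (α₁:ℂ) * ffun α₁ c (n-1) m a) - ffun α₁ c n (m+1) a) (volume.restrict Sbox) := h012.sub h3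
  rw [← integral_const_mul, ← integral_const_mul, ← integral_const_mul,
    ← integral_sub h0 h1, ← integral_sub h01 h2,
    ← integral_sub h012 h3,
    ← integral_sub h0123 h4, step]
  exact int_exp2 n m


lemma sbox_meas : MeasurableSet Sbox := (measurableSet_Icc).prod measurableSet_Icc

lemma sbox_neg : ∀ ξ : ℝ × ℝ, -ξ ∈ Sbox ↔ ξ ∈ Sbox := by
  intro ξ
  simp only [Sbox, Set.mem_prod, Set.mem_Icc, Prod.fst_neg, Prod.snd_neg]
  constructor <;> intro ⟨⟨a,b⟩,⟨d,e⟩⟩ <;> constructor <;> constructor <;> linarith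

lemma B_neg (α₁ c : ℝ) (n m : ℤ) : B α₁ c (-n) (-m) = B α₁ c n m := by
  rw [B_eq, B_eq]
  congr 1
  rw [← integral_indicator sbox_meas, ← integral_indicator sbox_meas]
  rw [← integral_neg_eq_self (Sbox.indicator (ffun α₁ c n m)) volume]
  congr 1
  funext ξ
  by_cases hξ : ξ ∈ Sbox
  · rw [Set.indicator_of_mem hξ, Set.indicator_of_mem ((sbox_neg ξ).mpr hξ)]
    unfold ffun Dfun
    simp only [Prod.fst_neg, Prod.snd_neg, Complex.ofReal_neg, Real.cos_neg]
    push_cast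
    ring_nf
  · rw [Set.indicator_of_notMem hξ, Set.indicator_of_notMem (fun h => hξ ((sbox_neg ξ).mp h))]


lemma pw_ffun (α₁ c : ℝ) (hα : 0 < α₁) (hc : 0 < c) (n m : ℤ) (ξ : ℝ × ℝ) :
    (2*α₁+2+c^2 : ℂ) * ffun α₁ c n m ξ =
      (α₁:ℂ) * ffun α₁ c (n+1) m ξ + (α₁:ℂ) * ffun α₁ c (n-1) m ξ +
      ffun α₁ c n (m+1) ξ + ffun α₁ c n (m-1) ξ +
      Complex.exp (-Complex.I * ((n : ℂ) * ξ.1 + (m : ℂ) * ξ.2)) := by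
  have hDpos := Dfun_pos hα hc ξ
  have hDne : ((Dfun α₁ c ξ : ℝ) : ℂ) ≠ 0 := by exact_mod_cast hDpos.ne'
  unfold ffun
  set E := Complex.exp (-Complex.I * ((n : ℂ) * ξ.1 + (m : ℂ) * ξ.2)) with hE
  have e1 : Complex.exp (-Complex.I * (((n+1 : ℤ) : ℂ) * ξ.1 + (m : ℂ) * ξ.2))
      = E * Complex.exp (-(ξ.1:ℂ) * Complex.I) := by
    rw [hE, ← Complex.exp_add]; push_cast; ring_nf
  have e2 : Complex.exp (-Complex.I * (((n-1 : ℤ) : ℂ) * ξ.1 + (m : ℂ) * ξ.2))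
      = E * Complex.exp ((ξ.1:ℂ) * Complex.I) := by
    rw [hE, ← Complex.exp_add]; push_cast; ring_nf
  have e3 : Complex.exp (-Complex.I * ((n : ℂ) * ξ.1 + ((m+1 : ℤ) : ℂ) * ξ.2))
      = E * Complex.exp (-(ξ.2:ℂ) * Complex.I) := by
    rw [hE, ← Complex.exp_add]; push_cast; ring_nf
  have e4 : Complex.exp (-Complex.I * ((n : ℂ) * ξ.1 + ((m-1 : ℤ) : ℂ) * ξ.2))
      = E * Complex.exp ((ξ.2:ℂ) * Complex.I) := by
    rw [hE, ← Complex.exp_add]; push_cast; ring_nf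
  have c1 : ((Real.cos ξ.1 : ℝ) : ℂ) = (Complex.exp ((ξ.1:ℂ)*Complex.I) + Complex.exp (-(ξ.1:ℂ)*Complex.I)) / 2 := by
    rw [Complex.ofReal_cos]; rfl
  have c2 : ((Real.cos ξ.2 : ℝ) : ℂ) = (Complex.exp ((ξ.2:ℂ)*Complex.I) + Complex.exp (-(ξ.2:ℂ)*Complex.I)) / 2 := by
    rw [Complex.ofReal_cos]; rfl
  have hDc : ((Dfun α₁ c ξ : ℝ) : ℂ) = 2 * α₁ * (1 - ((Real.cos ξ.1 : ℝ) : ℂ)) + 2 * (1 - ((Real.cos ξ.2 : ℝ):ℂ)) + (c:ℂ) ^ 2 := by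
    unfold Dfun; push_cast; ring
  rw [e1, e2, e3, e4]
  field_simp
  rw [hDc, c1, c2]
  ring

lemma key_B (α₁ c : ℝ) (hα : 0 < α₁) (hc : 0 < c) (n m : ℤ) :
    (2*α₁+2+c^2 : ℂ) * B α₁ c n m =
      (α₁:ℂ) * B α₁ c (n+1) m + (α₁:ℂ) * B α₁ c (n-1) m +
      B α₁ c n (m+1) + B α₁ c n (m-1) + (if n = 0 ∧ m = 0 then 1 else 0) := by
  have hI := key_int α₁ c hα hc n m (fun k l => ffun_integrable hα hc k l)
    (fun ξ => pw_ffun α₁ c hα hc n m ξ)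
  have hπ : ((2 * (Real.pi:ℂ)) ^ 2 : ℂ) ≠ 0 := by
    simp [Real.pi_ne_zero]
  have h5 : (1 / (2 * (Real.pi:ℂ)) ^ 2 : ℂ) * (if n = 0 ∧ m = 0 then ((2 * Real.pi) ^ 2 : ℂ) else 0)
      = (if n = 0 ∧ m = 0 then (1:ℂ) else 0) := by
    split
    · push_cast; field_simp
    · simp
  rw [B_eq, B_eq, B_eq, B_eq, B_eq]
  push_cast at h5 hI ⊢
  linear_combination (1 / (2 * (Real.pi:ℂ)) ^ 2 : ℂ) * hI + h5


lemma B00_pos (α₁ c : ℝ) (hα : 0 < α₁) (hc : 0 < c) :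
    ∃ r : ℝ, 0 < r ∧ B α₁ c 0 0 = (r : ℂ) := by
  have hfr : ∀ ξ : ℝ × ℝ, ffun α₁ c 0 0 ξ = (((Dfun α₁ c ξ)⁻¹ : ℝ) : ℂ) := by
    intro ξ
    unfold ffun
    push_cast
    simp [one_div]
  have hcont : Continuous (fun ξ : ℝ × ℝ => (Dfun α₁ c ξ)⁻¹) := by
    apply Continuous.inv₀
    · unfold Dfun; fun_prop
    · exact fun ξ => (Dfun_pos hα hc ξ).ne'
  have hKint : IntegrableOn (fun ξ : ℝ × ℝ => (Dfun α₁ c ξ)⁻¹) Sbox :=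
    hcont.continuousOn.integrableOn_compact ((isCompact_Icc).prod isCompact_Icc)
  set M : ℝ := 4 * α₁ + 4 + c ^ 2 with hM
  have hMpos : 0 < M := by positivity
  have hle : ∀ ξ ∈ Sbox, M⁻¹ ≤ (Dfun α₁ c ξ)⁻¹ := by
    intro ξ _
    apply inv_anti₀ (Dfun_pos hα hc ξ)
    have g1 := Real.neg_one_le_cos ξ.1
    have g2 := Real.neg_one_le_cos ξ.2
    unfold Dfun
    nlinarith
  have hμS : volume Sbox = ENNReal.ofReal (2 * Real.pi) * ENNReal.ofReal (2 * Real.pi) := by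
    rw [Sbox, Measure.volume_eq_prod, Measure.prod_prod, Real.volume_Icc]
    rw [show Real.pi - -Real.pi = 2 * Real.pi by ring]
  have hμfin : volume Sbox ≠ ⊤ := by rw [hμS]; exact ENNReal.mul_ne_top ENNReal.ofReal_ne_top ENNReal.ofReal_ne_top
  have hr := setIntegral_ge_of_const_le sbox_meas hμfin hle hKint
  have htoReal : (volume Sbox).toReal = (2 * Real.pi) * (2 * Real.pi) := by
    rw [hμS, ENNReal.toReal_mul, ENNReal.toReal_ofReal (by positivity)]
  have hrpos : 0 < ∫ ξ in Sbox, (Dfun α₁ c ξ)⁻¹ := by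
    calc (0:ℝ) < M⁻¹ * ((2 * Real.pi) * (2 * Real.pi)) := by positivity
    _ = M⁻¹ * (volume Sbox).toReal := by rw [htoReal]
    _ ≤ _ := by rw [mul_comm, ← smul_eq_mul]; exact hr
  refine ⟨(1 / (2 * Real.pi) ^ 2) * ∫ ξ in Sbox, (Dfun α₁ c ξ)⁻¹, by positivity, ?_⟩
  rw [B_eq]
  simp_rw [hfr]
  have hoo : ∫ ξ in Sbox, (((Dfun α₁ c ξ)⁻¹ : ℝ) : ℂ) = (((∫ ξ in Sbox, (Dfun α₁ c ξ)⁻¹ : ℝ)) : ℂ) := by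
    exact integral_ofReal (𝕜 := ℂ)
  rw [hoo]
  push_cast
  ring



/-- Return probability of a 2D random walk with killing, expressed via the LGF with
`α₁ = p₁/p₂` and `c = κ = √((1 − 2p₁ − 2p₂)/p₂)`: `ρ(0,0) = 1` and `ρ` satisfies the
harmonicity relation away from the origin. -/
theorem stmt17 (p₁ p₂ : ℝ) (h₁ : 0 < p₁) (h₂ : p₁ ≤ p₂) (h₃ : 2 * p₁ + 2 * p₂ < 1)
    (κ : ℝ) (hκ : κ = Real.sqrt ((1 - 2 * p₁ - 2 * p₂) / p₂))
    (C : ℂ)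
    (hC : C = 1 / (1 + (2 * p₁ / p₂ : ℝ) * B (p₁ / p₂) κ 1 0 + 2 * B (p₁ / p₂) κ 0 1))
    (ρ : ℤ → ℤ → ℂ) (hρ : ∀ n m : ℤ, ρ n m = (C / (p₂ : ℂ)) * B (p₁ / p₂) κ n m) :
    ρ 0 0 = 1 ∧
      ∀ n m : ℤ, ¬(n = 0 ∧ m = 0) →
        ρ n m = (p₁ : ℂ) * ρ (n + 1) m + (p₁ : ℂ) * ρ (n - 1) m +
          (p₂ : ℂ) * ρ n (m + 1) + (p₂ : ℂ) * ρ n (m - 1) := by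
  have hp₂ : 0 < p₂ := lt_of_lt_of_le h₁ h₂
  have hp₂C : (p₂ : ℂ) ≠ 0 := by exact_mod_cast hp₂.ne'
  set α₁ : ℝ := p₁ / p₂ with hα₁
  have hα : 0 < α₁ := div_pos h₁ hp₂
  have hκpos : 0 < κ := by
    rw [hκ]; exact Real.sqrt_pos.mpr (div_pos (by linarith) hp₂)
  have hκsq : κ ^ 2 = (1 - 2 * p₁ - 2 * p₂) / p₂ := by
    rw [hκ, Real.sq_sqrt (div_nonneg (by linarith) hp₂.le)]
  have hcoef : (2 * α₁ + 2 + κ ^ 2 : ℝ) = 1 / p₂ := by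
    rw [hκsq, hα₁]; field_simp; ring
  have hcoefC : (2 * (α₁:ℂ) + 2 + (κ:ℂ) ^ 2) = 1 / (p₂:ℂ) := by
    exact_mod_cast congrArg (fun x : ℝ => (x : ℂ)) hcoef
  have keyC : ∀ n m : ℤ, (1 / (p₂:ℂ)) * B α₁ κ n m =
      (α₁:ℂ) * B α₁ κ (n+1) m + (α₁:ℂ) * B α₁ κ (n-1) m +
      B α₁ κ n (m+1) + B α₁ κ n (m-1) + (if n = 0 ∧ m = 0 then 1 else 0) := by
    intro n m
    have h := key_B α₁ κ hα hκpos n m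
    rw [hcoefC] at h
    exact h
  have hcast : (α₁:ℂ) * (p₂:ℂ) = (p₁:ℂ) := by
    rw [hα₁]; push_cast; field_simp
  obtain ⟨r, hrpos, hr00⟩ := B00_pos α₁ κ hα hκpos
  have hrC : (r : ℂ) ≠ 0 := by exact_mod_cast hrpos.ne'
  -- the X relation
  have hsym1 : B α₁ κ (-1) 0 = B α₁ κ 1 0 := by
    have h := B_neg α₁ κ 1 0; norm_num at h; exact h
  have hsym2 : B α₁ κ 0 (-1) = B α₁ κ 0 1 := by
    have h := B_neg α₁ κ 0 1; norm_num at h; exact h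
  have hk0 := keyC 0 0
  norm_num at hk0
  rw [hsym1, hsym2] at hk0
  have hXeq : (1 + ((2 * p₁ / p₂ : ℝ):ℂ) * B α₁ κ 1 0 + 2 * B α₁ κ 0 1 : ℂ)
      = (1 / (p₂:ℂ)) * B α₁ κ 0 0 := by
    have hc2 : ((2 * p₁ / p₂ : ℝ):ℂ) = 2 * (α₁:ℂ) := by rw [hα₁]; push_cast; ring
    rw [hc2]
    linear_combination -hk0
  constructor
  · rw [hρ 0 0, hC, hXeq, hr00]
    field_simp
  · intro n m hnm
    have hk := keyC n m
    rw [if_neg hnm] at hk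
    have h1 : (p₂:ℂ) * (1 / (p₂:ℂ)) = 1 := by field_simp
    have hk' : B α₁ κ n m = (p₁:ℂ) * B α₁ κ (n+1) m + (p₁:ℂ) * B α₁ κ (n-1) m +
        (p₂:ℂ) * B α₁ κ n (m+1) + (p₂:ℂ) * B α₁ κ n (m-1) := by
      linear_combination (p₂:ℂ) * hk + (B α₁ κ (n+1) m + B α₁ κ (n-1) m) * hcast
        - B α₁ κ n m * h1
    rw [hρ n m, hρ (n+1) m, hρ (n-1) m, hρ n (m+1), hρ n (m-1)]
    linear_combination (C / (p₂:ℂ)) * hk'
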